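/- Assume 1+α₁β > 0, 1+α₂β > 0, μ − k₁² − k₂² > 0, and F(k) < μ, where F(k) = (1 + 2(1+β²)/(1+α₁β))k₁² + (1 + 2(1+β²)/(1+α₂β))k₂². Then the symmetric matrix 𝒟(k) with entries D_xx = 2k₁²(1+β²)/R₀² − (α₁β+1), D_yy = 2k₂²(1+β²)/R₀² − (α₂β+1), D_xy = 2k₁k₂(1+β²)/R₀² (with R₀² = μ − k₁² − k₂²) is negative definite. -/

import Mathlib

/-- Inside the ellipse `F(k) = μ`, with `1+α₁β > 0` and `1+α₂β > 0`, the matrix 𝒟(k)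
is negative definite. -/
theorem D_negdef_inside_ellipse (α₁ α₂ β μ k₁ k₂ : ℝ)
    (h1 : 1 + α₁ * β > 0) (h2 : 1 + α₂ * β > 0)
    (hR : μ - k₁ ^ 2 - k₂ ^ 2 > 0)
    (hF : (1 + 2 * (1 + β ^ 2) / (1 + α₁ * β)) * k₁ ^ 2
        + (1 + 2 * (1 + β ^ 2) / (1 + α₂ * β)) * k₂ ^ 2 < μ) :
    let R0sq := μ - k₁ ^ 2 - k₂ ^ 2
    let Dxx := 2 * k₁ ^ 2 * (1 + β ^ 2) / R0sq - (α₁ * β + 1)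
    let Dyy := 2 * k₂ ^ 2 * (1 + β ^ 2) / R0sq - (α₂ * β + 1)
    let Dxy := 2 * k₁ * k₂ * (1 + β ^ 2) / R0sq
    ∀ q₁ q₂ : ℝ, (q₁, q₂) ≠ (0, 0) →
      Dxx * q₁ ^ 2 + 2 * Dxy * q₁ * q₂ + Dyy * q₂ ^ 2 < 0 := by
  intro R0sq Dxx Dyy Dxy q₁ q₂ hq
  have ha := h1
  have hb := h2
  have hR' : (0:ℝ) < μ - k₁ ^ 2 - k₂ ^ 2 := hR
  -- clear denominators in hF
  have hF' : 2 * (1 + β ^ 2) * (k₁ ^ 2 * (1 + α₂ * β) + k₂ ^ 2 * (1 + α₁ * β))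
      < (μ - k₁ ^ 2 - k₂ ^ 2) * ((1 + α₁ * β) * (1 + α₂ * β)) := by
    have hm := mul_lt_mul_of_pos_right (mul_lt_mul_of_pos_right hF h1) h2
    have hid : ((1 + 2 * (1 + β ^ 2) / (1 + α₁ * β)) * k₁ ^ 2
        + (1 + 2 * (1 + β ^ 2) / (1 + α₂ * β)) * k₂ ^ 2) * (1 + α₁ * β) * (1 + α₂ * β)
        = (k₁ ^ 2 + k₂ ^ 2) * ((1 + α₁ * β) * (1 + α₂ * β))
          + 2 * (1 + β ^ 2) * (k₁ ^ 2 * (1 + α₂ * β) + k₂ ^ 2 * (1 + α₁ * β)) := by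
      have e1 : 2 * (1 + β ^ 2) / (1 + α₁ * β) * (1 + α₁ * β) = 2 * (1 + β ^ 2) :=
        div_mul_cancel₀ _ (ne_of_gt h1)
      have e2 : 2 * (1 + β ^ 2) / (1 + α₂ * β) * (1 + α₂ * β) = 2 * (1 + β ^ 2) :=
        div_mul_cancel₀ _ (ne_of_gt h2)
      linear_combination (k₁ ^ 2 * (1 + α₂ * β)) * e1 + (k₂ ^ 2 * (1 + α₁ * β)) * e2
    nlinarith [hm, hid]
  -- positivity of a q₁² + b q₂²
  have hq' : 0 < (α₁ * β + 1) * q₁ ^ 2 + (α₂ * β + 1) * q₂ ^ 2 := by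
    have : q₁ ≠ 0 ∨ q₂ ≠ 0 := by
      by_contra hc
      push_neg at hc
      exact hq (by simp [hc.1, hc.2])
    rcases this with h | h
    · have h0 : 0 < (α₁ * β + 1) * q₁ ^ 2 :=
        mul_pos (by linarith) (by positivity)
      nlinarith [sq_nonneg q₂]
    · have h0 : 0 < (α₂ * β + 1) * q₂ ^ 2 :=
        mul_pos (by linarith) (by positivity)
      nlinarith [sq_nonneg q₁]
  have key : 2 * (1 + β ^ 2) * (k₁ * q₁ + k₂ * q₂) ^ 2
      < (μ - k₁ ^ 2 - k₂ ^ 2) * ((α₁ * β + 1) * q₁ ^ 2 + (α₂ * β + 1) * q₂ ^ 2) := by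
    nlinarith [mul_pos h1 h2, sq_nonneg (k₁ * (1 + α₂ * β) * q₂ - k₂ * (1 + α₁ * β) * q₁),
      mul_lt_mul_of_pos_right hF' hq', sq_nonneg (k₁ * q₁ + k₂ * q₂),
      mul_nonneg (by positivity : (0:ℝ) ≤ 2 * (1 + β ^ 2))
        (sq_nonneg (k₁ * (1 + α₂ * β) * q₂ - k₂ * (1 + α₁ * β) * q₁))]
  have hform : Dxx * q₁ ^ 2 + 2 * Dxy * q₁ * q₂ + Dyy * q₂ ^ 2
      = (2 * (1 + β ^ 2) * (k₁ * q₁ + k₂ * q₂) ^ 2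
        - (μ - k₁ ^ 2 - k₂ ^ 2) * ((α₁ * β + 1) * q₁ ^ 2 + (α₂ * β + 1) * q₂ ^ 2))
        / (μ - k₁ ^ 2 - k₂ ^ 2) := by
    show (2 * k₁ ^ 2 * (1 + β ^ 2) / (μ - k₁ ^ 2 - k₂ ^ 2) - (α₁ * β + 1)) * q₁ ^ 2
      + 2 * (2 * k₁ * k₂ * (1 + β ^ 2) / (μ - k₁ ^ 2 - k₂ ^ 2)) * q₁ * q₂
      + (2 * k₂ ^ 2 * (1 + β ^ 2) / (μ - k₁ ^ 2 - k₂ ^ 2) - (α₂ * β + 1)) * q₂ ^ 2 = _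
    field_simp
    ring
  rw [hform]
  exact div_neg_of_neg_of_pos (by linarith) hR'
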